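/- arXiv:2010.09011 — 5 statements merged into one kernel-verified Lean document; each statement's English description precedes it below -/
import Mathlib

section
/- For distinct positive reals v_1,...,v_n, det(v_i^j - v_i^{-j})_{i,j=1}^n = (-1)^n · ∏_{i<j}(v_i - v_j) · ∏_{1≤i≤j≤n}(1 - v_i v_j) · ∏_{j=1}^n v_j^{-n}. -/
open Polynomial

noncomputable def Scheb : ℕ → Polynomial ℝ
  | 0 => 1
  | 1 => Polynomial.X
  | (n+2) => Polynomial.X * Scheb (n+1) - Scheb n

theorem Scheb_monic_deg : ∀ n, (Scheb n).Monic ∧ (Scheb n).natDegree = n := by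
  intro n
  induction n using Nat.strong_induction_on with
  | _ n ih =>
    match n with
    | 0 => exact ⟨monic_one, natDegree_one⟩
    | 1 => exact ⟨monic_X, natDegree_X⟩
    | (n+2) =>
      obtain ⟨h1, h2⟩ := ih (n+1) (by omega)
      obtain ⟨h3, h4⟩ := ih n (by omega)
      have hm : (Polynomial.X * Scheb (n+1)).Monic := (monic_X).mul h1
      have hd : (Polynomial.X * Scheb (n+1)).natDegree = n + 2 := by
        rw [natDegree_X_mul h1.ne_zero, h2]
      have key : (Scheb (n+2)).Monic ∧ (Scheb (n+2)).natDegree = n+2 := by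
        rw [show Scheb (n+2) = Polynomial.X * Scheb (n+1) - Scheb n from rfl]
        have hlt : (Scheb n).natDegree < (Polynomial.X * Scheb (n+1)).natDegree := by
          rw [hd, h4]; omega
        constructor
        · exact hm.sub_of_left (Polynomial.degree_lt_degree hlt)
        · rw [Polynomial.natDegree_sub_eq_left_of_natDegree_lt hlt, hd]
      exact key

theorem Scheb_eval (v w : ℝ) (hvw : v * w = 1) :
    ∀ j : ℕ, (v - w) * (Scheb j).eval (v + w) = v ^ (j+1) - w ^ (j+1) := by
  intro j
  induction j using Nat.strong_induction_on with
  | _ j ih =>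
    match j with
    | 0 => simp [Scheb]
    | 1 => simp [Scheb]; ring
    | (j+2) =>
      have h1 := ih (j+1) (by omega)
      have h2 := ih j (by omega)
      rw [show Scheb (j+2) = Polynomial.X * Scheb (j+1) - Scheb j from rfl]
      simp only [eval_sub, eval_mul, eval_X]
      linear_combination (v + w) * h1 - h2 + (v^(j+1) - w^(j+1)) * hvw


/-- For distinct positive reals `v 1, ..., v n`,
`det (v i ^ j - v i ^ (-j)) = (-1)^n ∏_{i<j} (v i - v j) ∏_{i ≤ j} (1 - v i v j) ∏_j v j ^ (-n)`.
Indices `i j : Fin n` are 0-indexed, so the matrix entry is `v i ^ (j+1) - v i ^ (-(j+1))`. -/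
theorem stmt0 (n : ℕ) (v : Fin n → ℝ) (hv : ∀ i, 0 < v i) (hinj : Function.Injective v) :
    Matrix.det (Matrix.of fun i j : Fin n =>
        v i ^ ((j : ℤ) + 1) - v i ^ (-((j : ℤ) + 1))) =
      (-1) ^ n * (∏ i : Fin n, ∏ j ∈ Finset.univ.filter (fun j => i < j), (v i - v j)) *
        (∏ i : Fin n, ∏ j ∈ Finset.univ.filter (fun j => i ≤ j), (1 - v i * v j)) *
        ∏ j : Fin n, v j ^ (-(n : ℤ)) := by
  have hvne : ∀ i, v i ≠ 0 := fun i => (hv i).ne'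
  set y : Fin n → ℝ := fun i => v i + (v i)⁻¹ with hy
  -- Step 1: rewrite matrix and pull out row factors
  have hM : (Matrix.of fun i j : Fin n => v i ^ ((j : ℤ) + 1) - v i ^ (-((j : ℤ) + 1))) =
      Matrix.of fun i j => (v i - (v i)⁻¹) *
        (Matrix.of fun i j : Fin n => (Scheb j).eval (y i)) i j := by
    ext i j
    simp only [Matrix.of_apply]
    have e1 : v i ^ ((j : ℤ) + 1) = v i ^ ((j : ℕ) + 1) := by
      rw [← zpow_natCast]; norm_cast
    have e2 : v i ^ (-((j : ℤ) + 1)) = ((v i)⁻¹) ^ ((j : ℕ) + 1) := by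
      rw [zpow_neg, ← inv_zpow, ← zpow_natCast]; norm_cast
    rw [e1, e2]
    exact (Scheb_eval (v i) (v i)⁻¹ (mul_inv_cancel₀ (hvne i)) j).symm
  rw [hM, Matrix.det_mul_column,
    ← Matrix.det_eval_matrixOfPolynomials_eq_det_vandermonde y (fun j => Scheb j)
      (fun j => (Scheb_monic_deg j).2) (fun j => (Scheb_monic_deg j).1),
    Matrix.det_vandermonde]
  -- Step 2: factor each Vandermonde term
  have hfac : ∀ i j : Fin n, y j - y i = (v i - v j) * (1 - v i * v j) * ((v i)⁻¹ * (v j)⁻¹) := by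
    intro i j
    have hi := hvne i; have hj := hvne j
    simp only [hy]
    field_simp
    ring
  have hrow : ∀ i, v i - (v i)⁻¹ = (-1) * (1 - v i * v i) * (v i)⁻¹ := by
    intro i; have hi := hvne i; field_simp; ring
  -- Step 3: identify the filters with Ioi/Ici
  have hflt : ∀ i : Fin n, Finset.univ.filter (fun j => i < j) = Finset.Ioi i := by
    intro i; exact Finset.filter_lt_eq_Ioi
  have hfle : ∀ i : Fin n, Finset.univ.filter (fun j => i ≤ j) = Finset.Ici i := by
    intro i; exact Finset.filter_le_eq_Ici
  simp_rw [hflt, hfle]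
  have hIci : ∀ i : Fin n, (∏ j ∈ Finset.Ici i, (1 - v i * v j)) =
      (1 - v i * v i) * ∏ j ∈ Finset.Ioi i, (1 - v i * v j) := by
    intro i
    rw [← Finset.Ioi_insert, Finset.prod_insert (by simp)]
  -- Step 4: the power bookkeeping
  have hpow : (∏ i : Fin n, (v i)⁻¹) * ∏ i : Fin n, ∏ j ∈ Finset.Ioi i, ((v i)⁻¹ * (v j)⁻¹) =
      ∏ j : Fin n, v j ^ (-(n : ℤ)) := by
    have hswap : (∏ i : Fin n, ∏ j ∈ Finset.Ioi i, (v j)⁻¹) =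
        ∏ j : Fin n, ∏ i ∈ Finset.Iio j, (v j)⁻¹ := by
      refine Finset.prod_comm' ?_
      intro i j; simp [Finset.mem_Ioi, Finset.mem_Iio]
    simp_rw [Finset.prod_mul_distrib, hswap, Finset.prod_const, Fin.card_Ioi, Fin.card_Iio]
    rw [← Finset.prod_mul_distrib, ← Finset.prod_mul_distrib]
    refine Finset.prod_congr rfl fun i _ => ?_
    have hi := i.isLt
    rw [zpow_neg, zpow_natCast, ← inv_pow, ← pow_add, ← pow_succ']
    congr 1
    omega
  have L1 : (∏ i : Fin n, (v i - (v i)⁻¹)) =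
      (-1) ^ n * (∏ i : Fin n, (1 - v i * v i)) * ∏ i : Fin n, (v i)⁻¹ := by
    simp_rw [hrow]
    rw [Finset.prod_mul_distrib, Finset.prod_mul_distrib, Finset.prod_const,
      Finset.card_univ, Fintype.card_fin]
  have L2 : (∏ i : Fin n, ∏ j ∈ Finset.Ioi i, (y j - y i)) =
      (∏ i : Fin n, ∏ j ∈ Finset.Ioi i, (v i - v j)) *
        (∏ i : Fin n, ∏ j ∈ Finset.Ioi i, (1 - v i * v j)) *
        ∏ i : Fin n, ∏ j ∈ Finset.Ioi i, ((v i)⁻¹ * (v j)⁻¹) := by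
    simp_rw [hfac, Finset.prod_mul_distrib]
  have L3 : (∏ i : Fin n, ∏ j ∈ Finset.Ici i, (1 - v i * v j)) =
      (∏ i : Fin n, (1 - v i * v i)) * ∏ i : Fin n, ∏ j ∈ Finset.Ioi i, (1 - v i * v j) := by
    simp_rw [hIci]; rw [Finset.prod_mul_distrib]
  rw [L1, L2, L3, ← hpow]
  ring
end

section
/- Harmonicity of h_A: for distinct positive v_1,...,v_n, the function h_A(x) = ∏_{i=1}^n v_{n-i+1}^{-x_i} S_x(v) on W^n = {x ∈ ℤ^n : x_1 ≤ ... ≤ x_n} satisfies Σ_{i=1}^n [ v_{n-i+1} h_A(x + e_i) 1_{x+e_i ∈ W^n} + v_{n-i+1}^{-1} h_A(x - e_i) 1_{x-e_i ∈ W^n} ] = ( Σ_{i=1}^n (v_i + v_i^{-1}) ) h_A(x) for all x ∈ W^n. -/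
open scoped Classical

/-- The Schur function `S_x(v) = det(v a ^ (x b + b - 1)) / det(v a ^ (b - 1))`
(1-based; here 0-based so the exponents are `x b + b` and `b`). -/
noncomputable def schurS {n : ℕ} (v : Fin n → ℝ) (x : Fin n → ℤ) : ℝ :=
  Matrix.det (Matrix.of fun a b : Fin n => v a ^ (x b + (b : ℤ))) /
    Matrix.det (Matrix.of fun a b : Fin n => v a ^ (b : ℕ))

/-- `h_A(x) = ∏ i, v_{n-i+1} ^ (-x i) * S_x(v)`. -/
noncomputable def hA {n : ℕ} (v : Fin n → ℝ) (x : Fin n → ℤ) : ℝ :=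
  (∏ i : Fin n, v (Fin.rev i) ^ (-x i)) * schurS v x

lemma trace_key {n : ℕ} (M A : Matrix (Fin n) (Fin n) ℝ) :
    ∑ i, (M.updateCol i (fun a => (A * M) a i)).det = A.trace * M.det := by
  have h1 : ∀ i : Fin n, (M.updateCol i (fun a => (A * M) a i)).det
      = (M.adjugate * (A * M)) i i := by
    intro i
    rw [← Matrix.cramer_apply, Matrix.cramer_eq_adjugate_mulVec]
    simp [Matrix.mul_apply, Matrix.mulVec]
    rfl
  simp_rw [h1]
  have : ∑ i, (M.adjugate * (A * M)) i i = Matrix.trace (M.adjugate * (A * M)) := rfl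
  rw [this, Matrix.trace_mul_comm, Matrix.mul_assoc, Matrix.mul_adjugate]
  simp [Matrix.trace_smul, mul_comm]

lemma schurS_zero {n : ℕ} (v : Fin n → ℝ) (x : Fin n → ℤ) (i j : Fin n) (hij : i ≠ j)
    (h : x i + (i : ℤ) = x j + (j : ℤ)) : schurS v x = 0 := by
  unfold schurS
  rw [Matrix.det_zero_of_column_eq hij (fun k => by simp [h]), zero_div]

lemma hA_plus_zero {n : ℕ} (v : Fin n → ℝ) (x : Fin n → ℤ) (hx : Monotone x) (i : Fin n)
    (h : ¬ Monotone (x + Pi.single i 1)) : hA v (x + Pi.single i 1) = 0 := by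
  simp only [Monotone, not_forall, not_le] at h
  obtain ⟨a, b, hab, hba⟩ := h
  simp only [Pi.add_apply, Pi.single_apply] at hba
  have hxab : x a ≤ x b := hx hab
  have hai : a = i := by
    by_contra hne
    simp only [hne, if_false, add_zero] at hba
    rcases eq_or_ne b i with hbi | hbi
    · simp [hbi] at hba hxab; omega
    · simp [hbi] at hba; omega
  subst hai
  have hbi : b ≠ a := by
    rintro rfl; simp at hba
  simp only [if_pos rfl, hbi, if_false, add_zero] at hba
  have hlt : (a : ℕ) < (b : ℕ) := Fin.lt_def.mp (hab.lt_of_ne (Ne.symm hbi))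
  have hxb : x b = x a := by omega
  have hjn : (a : ℕ) + 1 < n := lt_of_le_of_lt hlt b.isLt
  set j : Fin n := ⟨(a : ℕ) + 1, hjn⟩ with hj
  have hxj : x j = x a := le_antisymm (hxb ▸ hx (show j ≤ b from hlt)) (hx (show a ≤ j by simp [hj, Fin.le_def]))
  have := schurS_zero v (x + Pi.single a 1) a j
    (by intro hh; have h' := congrArg Fin.val hh; rw [hj] at h'; simp at h')
    (by simp [Pi.single_apply, hj, hxj, (Fin.ext_iff.not.mpr (by simp : (a:ℕ) ≠ (a:ℕ)+1) : a ≠ j)]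
        have hxj' := hxj; rw [hj] at hxj'; rw [if_neg (fun h => by simpa using congrArg Fin.val h)]; omega)
  simp [hA, this]

lemma hA_minus_zero {n : ℕ} (v : Fin n → ℝ) (x : Fin n → ℤ) (hx : Monotone x) (i : Fin n)
    (h : ¬ Monotone (x - Pi.single i 1)) : hA v (x - Pi.single i 1) = 0 := by
  simp only [Monotone, not_forall, not_le] at h
  obtain ⟨a, b, hab, hba⟩ := h
  simp only [Pi.sub_apply, Pi.single_apply] at hba
  have hxab : x a ≤ x b := hx hab
  have hbi : b = i := by
    by_contra hne
    simp only [hne, if_false, sub_zero] at hba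
    rcases eq_or_ne a i with hai | hai
    · simp [hai] at hba hxab; omega
    · simp [hai] at hba; omega
  subst hbi
  have hai : a ≠ b := by
    rintro rfl; simp at hba
  simp only [if_pos rfl, hai, if_false, sub_zero] at hba
  have hlt : (a : ℕ) < (b : ℕ) := Fin.lt_def.mp (hab.lt_of_ne hai)
  have hxa : x a = x b := by omega
  have hjn : (b : ℕ) - 1 < n := lt_of_le_of_lt (Nat.sub_le _ _) b.isLt
  set j : Fin n := ⟨(b : ℕ) - 1, hjn⟩ with hj
  have hxj : x j = x b := le_antisymm (hx (show j ≤ b from Nat.sub_le _ _))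
    (hxa ▸ hx (show a ≤ j by simp [hj, Fin.le_def]; omega))
  have hjb : b ≠ j := by
    intro hh; have := congrArg Fin.val hh; simp [hj] at this; omega
  have := schurS_zero v (x - Pi.single b 1) b j hjb
    (by simp [Pi.single_apply, hj, hxj, hjb.symm, Ne.symm hjb]
        have hxj' := hxj; rw [hj] at hxj'; omega)
  simp [hA, this]

lemma main_calc (n : ℕ) (v : Fin n → ℝ) (hv : ∀ i, 0 < v i)
    (x : Fin n → ℤ) :
    (∑ i : Fin n, (v (Fin.rev i) * hA v (x + Pi.single i 1) +
          (v (Fin.rev i))⁻¹ * hA v (x - Pi.single i 1))) =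
      (∑ i : Fin n, (v i + (v i)⁻¹)) * hA v x := by
  have hv0 : ∀ i, v i ≠ 0 := fun i => (hv i).ne'
  set M : Matrix (Fin n) (Fin n) ℝ := Matrix.of fun a b : Fin n => v a ^ (x b + (b : ℤ)) with hM
  set D : ℝ := Matrix.det (Matrix.of fun a b : Fin n => v a ^ (b : ℕ)) with hD
  set P : ℝ := ∏ j : Fin n, v (Fin.rev j) ^ (-x j) with hP
  set A : Matrix (Fin n) (Fin n) ℝ := Matrix.diagonal (fun a => v a + (v a)⁻¹) with hA'
  have pre : ∀ (i : Fin n) (s : ℤ), (∏ j : Fin n, v (Fin.rev j) ^ (-(x j + (Pi.single i s : Fin n → ℤ) j)))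
      = P * (v (Fin.rev i)) ^ (-s) := by
    intro i s
    have : ∀ j : Fin n, v (Fin.rev j) ^ (-(x j + (Pi.single i s : Fin n → ℤ) j))
        = v (Fin.rev j) ^ (-x j) * v (Fin.rev j) ^ (-((Pi.single i s : Fin n → ℤ) j)) := by
      intro j; rw [neg_add, zpow_add₀ (hv0 _)]
    rw [Finset.prod_congr rfl (fun j _ => this j), Finset.prod_mul_distrib, hP]
    congr 1
    rw [Finset.prod_eq_single i (fun j _ hj => by simp [Pi.single_apply, hj]) (by simp)]
    simp
  have numgen : ∀ (i : Fin n) (s : ℤ),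
      (Matrix.of fun a b : Fin n => v a ^ ((x + Pi.single i s : Fin n → ℤ) b + (b : ℤ)))
      = M.updateCol i (fun a => v a ^ s * v a ^ (x i + (i : ℤ))) := by
    intro i s
    ext a b
    rw [Matrix.updateCol_apply]
    by_cases hb : b = i
    · subst hb
      simp only [Matrix.of_apply, Pi.add_apply, Pi.single_apply, if_pos rfl, if_true,
        eq_self_iff_true, hM]
      rw [← zpow_add₀ (hv0 a)]
      congr 1; ring
    · simp [Pi.single_apply, hb, hM]
  have key : ∀ (i : Fin n) (s : ℤ),
      v (Fin.rev i) ^ s * hA v (x + Pi.single i s)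
      = P * ((M.updateCol i (fun a => v a ^ s * v a ^ (x i + (i : ℤ)))).det / D) := by
    intro i s
    rw [hA, schurS, numgen i s]
    simp only [Pi.add_apply]
    rw [pre i s, ← hD]
    rw [mul_comm P (v (Fin.rev i) ^ (-s)), ← mul_assoc, ← mul_assoc, ← zpow_add₀ (hv0 _)]
    simp
  have detsum : ∀ i : Fin n,
      (M.updateCol i (fun a => v a * v a ^ (x i + (i:ℤ)))).det
      + (M.updateCol i (fun a => (v a)⁻¹ * v a ^ (x i + (i:ℤ)))).det
      = (M.updateCol i (fun a => (A * M) a i)).det := by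
    intro i
    rw [← Matrix.det_updateCol_add]
    congr 1
    ext a b
    by_cases hb : b = i
    · simp only [Matrix.updateCol_apply, if_pos hb, Pi.add_apply, hA', Matrix.diagonal_mul,
        Matrix.of_apply, hM]
      ring
    · simp [Matrix.updateCol_apply, hb]
  have step1 : (∑ i : Fin n, (v (Fin.rev i) * hA v (x + Pi.single i 1) +
          (v (Fin.rev i))⁻¹ * hA v (x - Pi.single i 1)))
      = ∑ i : Fin n, P * ((M.updateCol i (fun a => (A * M) a i)).det / D) := by
    refine Finset.sum_congr rfl fun i _ => ?_
    have e1 := key i 1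
    have e2 := key i (-1)
    simp only [zpow_neg_one, zpow_one] at e1 e2
    have hsub : x - Pi.single i 1 = x + Pi.single i (-1) := by
      funext j; simp [Pi.single_apply]; split <;> ring
    rw [← hsub] at e2
    rw [e1, e2, ← detsum i, add_div, mul_add]
  rw [step1, ← Finset.mul_sum, ← Finset.sum_div, trace_key M A]
  have htr : A.trace = ∑ i : Fin n, (v i + (v i)⁻¹) := by
    rw [hA', Matrix.trace_diagonal]
  rw [htr, hA, schurS, ← hM, ← hD, ← hP]
  ring

/-- Harmonicity of `h_A` for the independent walk (component `i` jumping right at rate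
`v_{n-i+1}` and left at rate `v_{n-i+1}⁻¹`) killed on leaving the Weyl chamber
`W^n = {x : x 1 ≤ ... ≤ x n}`:
`Σ_i [v_{n-i+1} h_A(x+e_i) 1_{x+e_i ∈ W} + v_{n-i+1}⁻¹ h_A(x-e_i) 1_{x-e_i ∈ W}]
  = (Σ_i (v i + v i⁻¹)) h_A(x)`. -/
theorem stmt12 (n : ℕ) (v : Fin n → ℝ) (hv : ∀ i, 0 < v i) (hinj : Function.Injective v)
    (x : Fin n → ℤ) (hx : Monotone x) :
    (∑ i : Fin n,
        (v (Fin.rev i) * (if Monotone (x + Pi.single i 1) then hA v (x + Pi.single i 1) else 0) +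
          (v (Fin.rev i))⁻¹ *
            (if Monotone (x - Pi.single i 1) then hA v (x - Pi.single i 1) else 0))) =
      (∑ i : Fin n, (v i + (v i)⁻¹)) * hA v x := by
  have := main_calc n v hv x
  rw [← this]
  refine Finset.sum_congr rfl fun i _ => ?_
  congr 1
  · congr 1
    split_ifs with h
    · rfl
    · exact (hA_plus_zero v x hx i h).symm
  · congr 1
    split_ifs with h
    · rfl
    · exact (hA_minus_zero v x hx i h).symm
end

section
/- The ratio-of-Schur Q-matrix is conservative: for distinct positive v_1,...,v_n and x ∈ W^n = {x ∈ ℤ^n : x_1 ≤ ... ≤ x_n}, Σ_{i=1}^n [ (S_{x+e_i}(v)/S_x(v)) 1_{x+e_i ∈ W^n} + (S_{x-e_i}(v)/S_x(v)) 1_{x-e_i ∈ W^n} ] = Σ_{i=1}^n (v_i + v_i^{-1}). -/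
open scoped Classical

open Real in
lemma aux_indep : ∀ (n : ℕ) (μ : Fin n → ℝ), Function.Injective μ →
    ∀ (c t : Fin n → ℝ), StrictMono t → (∀ i, 0 < t i) →
    (∀ i, ∑ b, c b * t i ^ (μ b) = 0) → ∀ b, c b = 0 := by
  intro n
  induction n with
  | zero => intro μ _ c t _ _ _ b; exact b.elim0
  | succ n ih =>
    intro μ hμ c t hts ht0 hz
    set e : Fin (n+1) → ℝ := fun b => μ b - μ 0 with he
    set g : ℝ → ℝ := fun u => ∑ b, c b * u ^ (e b) with hg
    have hg0 : ∀ i, g (t i) = 0 := by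
      intro i
      have h1 : g (t i) = (t i) ^ (-(μ 0)) * ∑ b, c b * t i ^ (μ b) := by
        rw [Finset.mul_sum]
        refine Finset.sum_congr rfl fun b _ => ?_
        rw [← mul_assoc, mul_comm ((t i) ^ (-(μ 0))) (c b), mul_assoc,
          ← Real.rpow_add (ht0 i)]
        ring_nf
        rw [show e b = -μ 0 + μ b by simp only [he]; ring]
      rw [h1, hz i, mul_zero]
    have hderiv : ∀ u : ℝ, 0 < u →
        HasDerivAt g (∑ b, c b * (e b * u ^ (e b - 1))) u := by
      intro u hu
      apply HasDerivAt.fun_sum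
      intro b _
      exact (Real.hasDerivAt_rpow_const (Or.inl hu.ne')).const_mul (c b)
    have rolle : ∀ i : Fin n, ∃ s, t i.castSucc < s ∧ s < t i.succ ∧
        (∑ b, c b * (e b * s ^ (e b - 1))) = 0 := by
      intro i
      have hlt : t i.castSucc < t i.succ := hts (Fin.castSucc_lt_succ (i := i))
      obtain ⟨s, hs, hs0⟩ := exists_hasDerivAt_eq_zero hlt
        (fun u hu => ((hderiv u (lt_of_lt_of_le (ht0 _) hu.1)).continuousAt).continuousWithinAt)
        ((hg0 _).trans (hg0 _).symm)
        (fun u hu => hderiv u (lt_trans (ht0 _) hu.1))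
      exact ⟨s, hs.1, hs.2, hs0⟩
    choose s hs1 hs2 hs0 using rolle
    have hss : StrictMono s := by
      intro i j hij
      calc s i < t i.succ := hs2 i
        _ ≤ t j.castSucc := hts.monotone (by
            rw [Fin.le_def, Fin.coe_castSucc, Fin.val_succ]
            exact hij)
        _ < s j := hs1 j
    have hspos : ∀ i, 0 < s i := fun i => lt_trans (ht0 _) (hs1 i)
    have key : ∀ b : Fin n, c b.succ * e b.succ = 0 := by
      apply ih (fun b => e b.succ - 1)
        (fun b b' hbb => by
          have h2 : μ b.succ = μ b'.succ := by
            simp only [he] at hbb; linarith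
          exact Fin.succ_injective _ (hμ h2))
        _ s hss hspos
      intro i
      have h0 := hs0 i
      rw [Fin.sum_univ_succ] at h0
      have he0 : e 0 = 0 := by simp [he]
      rw [he0] at h0
      simp only [zero_mul, mul_zero, zero_add] at h0
      rw [← h0]
      refine Finset.sum_congr rfl fun b _ => by ring
    have hcs : ∀ b : Fin n, c b.succ = 0 := by
      intro b
      have hne : e b.succ ≠ 0 := by
        simp only [he, sub_ne_zero]
        exact fun h => Fin.succ_ne_zero b (hμ h)
      exact (mul_eq_zero.mp (key b)).resolve_right hne
    have hc0 : c 0 = 0 := by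
      have h0 := hz 0
      rw [Fin.sum_univ_succ] at h0
      simp only [hcs, zero_mul, Finset.sum_const_zero, add_zero] at h0
      have hpos : (0:ℝ) < t 0 ^ (μ 0) := Real.rpow_pos_of_pos (ht0 0) _
      exact (mul_eq_zero.mp h0).resolve_right hpos.ne'
    intro b
    exact Fin.cases hc0 hcs b

lemma genVdm_ne_zero {n : ℕ} (v : Fin n → ℝ) (hv : ∀ i, 0 < v i)
    (hinj : Function.Injective v) (μ : Fin n → ℤ) (hμ : Function.Injective μ) :
    Matrix.det (Matrix.of fun a b : Fin n => v a ^ (μ b)) ≠ 0 := by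
  intro hdet
  obtain ⟨c, hc0, hc⟩ := (Matrix.exists_mulVec_eq_zero_iff).mpr hdet
  have hsort : StrictMono (v ∘ Tuple.sort v) :=
    (Tuple.monotone_sort v).strictMono_of_injective (hinj.comp (Tuple.sort v).injective)
  have := aux_indep n (fun b => (μ b : ℝ))
    (fun b b' h => hμ (by simpa using Int.cast_injective h))
    c (v ∘ Tuple.sort v) hsort (fun i => hv _)
    (fun i => by
      have h := congrFun hc (Tuple.sort v i)
      simp only [Matrix.mulVec, dotProduct, Pi.zero_apply] at h
      rw [← h]
      refine Finset.sum_congr rfl fun b _ => ?_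
      rw [Real.rpow_intCast]
      simp [Matrix.of_apply, mul_comm])
  exact hc0 (funext this)

lemma sum_det_update {n : ℕ} (A : Matrix (Fin n) (Fin n) ℝ) (d : Fin n → ℝ) :
    ∑ i, (A.updateCol i (fun a => d a * A a i)).det = (∑ a, d a) * A.det := by
  have h : ∀ i, (A.updateCol i (fun a => d a * A a i)).det
      = ∑ j, A.adjugate i j * (d j * A j i) := by
    intro i
    rw [← Matrix.cramer_apply, Matrix.cramer_eq_adjugate_mulVec]
    rfl
  simp_rw [h]
  rw [Finset.sum_comm]
  have h2 : ∀ j, ∑ i, A.adjugate i j * (d j * A j i) = d j * A.det := by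
    intro j
    have h3 : (A * A.adjugate) j j = A.det := by
      rw [Matrix.mul_adjugate]; simp [Matrix.one_apply]
    rw [← h3, Matrix.mul_apply, Finset.mul_sum]
    exact Finset.sum_congr rfl fun i _ => by ring
  simp_rw [h2]
  rw [← Finset.sum_mul]

/-- The ratio-of-Schur `Q`-matrix is conservative: for `x` in the Weyl chamber
`W^n = {x : x 1 ≤ ... ≤ x n}`,
`Σ_i [S_{x+e_i}/S_x · 1_{x+e_i ∈ W} + S_{x-e_i}/S_x · 1_{x-e_i ∈ W}] = Σ_i (v i + v i⁻¹)`. -/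
theorem stmt13 (n : ℕ) (v : Fin n → ℝ) (hv : ∀ i, 0 < v i) (hinj : Function.Injective v)
    (x : Fin n → ℤ) (hx : Monotone x) :
    (∑ i : Fin n,
        ((if Monotone (x + Pi.single i 1) then schurS v (x + Pi.single i 1) / schurS v x else 0) +
          (if Monotone (x - Pi.single i 1) then schurS v (x - Pi.single i 1) / schurS v x
            else 0))) =
      ∑ i : Fin n, (v i + (v i)⁻¹) := by
  have hvne : ∀ a, v a ≠ 0 := fun a => (hv a).ne'
  set A : Matrix (Fin n) (Fin n) ℝ := Matrix.of fun a b : Fin n => v a ^ (x b + (b : ℤ)) with hAdef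
  have hμmono : StrictMono (fun b : Fin n => x b + (b : ℤ)) := by
    intro b b' hb
    show x b + (b : ℤ) < x b' + (b' : ℤ)
    have h1 : x b ≤ x b' := hx hb.le
    have h2 : (b : ℤ) < (b' : ℤ) := by exact_mod_cast hb
    omega
  have hA : A.det ≠ 0 := genVdm_ne_zero v hv hinj _ hμmono.injective
  have hV : (Matrix.of fun a b : Fin n => v a ^ (b : ℕ)).det ≠ 0 :=
    Matrix.det_vandermonde_ne_zero_iff.mpr hinj
  have hratio : ∀ y : Fin n → ℤ, schurS v y / schurS v x =
      (Matrix.of fun a b : Fin n => v a ^ (y b + (b : ℤ))).det / A.det := by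
    intro y
    unfold schurS
    rw [div_div_div_comm, div_self hV, div_one]
  have hplus : ∀ i : Fin n,
      (Matrix.of fun a b : Fin n => v a ^ ((x + Pi.single i 1 : Fin n → ℤ) b + (b : ℤ)))
        = A.updateCol i (fun a => v a ^ (x i + (i : ℤ) + 1)) := by
    intro i
    ext a b
    by_cases hbi : b = i
    · subst hbi
      rw [Matrix.updateCol_self, Matrix.of_apply]
      simp only [Pi.add_apply, Pi.single_eq_same]
      rw [show x b + 1 + (b : ℤ) = x b + (b : ℤ) + 1 from by ring]
    · rw [Matrix.updateCol_ne hbi]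
      show v a ^ ((x + Pi.single i 1 : Fin n → ℤ) b + (b : ℤ)) = v a ^ (x b + (b : ℤ))
      simp only [Pi.add_apply, Pi.single_eq_of_ne hbi, add_zero]
  have hminus : ∀ i : Fin n,
      (Matrix.of fun a b : Fin n => v a ^ ((x - Pi.single i 1 : Fin n → ℤ) b + (b : ℤ)))
        = A.updateCol i (fun a => v a ^ (x i + (i : ℤ) - 1)) := by
    intro i
    ext a b
    by_cases hbi : b = i
    · subst hbi
      rw [Matrix.updateCol_self, Matrix.of_apply]
      simp only [Pi.sub_apply, Pi.single_eq_same]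
      rw [show x b - 1 + (b : ℤ) = x b + (b : ℤ) - 1 from by ring]
    · rw [Matrix.updateCol_ne hbi]
      show v a ^ ((x - Pi.single i 1 : Fin n → ℤ) b + (b : ℤ)) = v a ^ (x b + (b : ℤ))
      simp only [Pi.sub_apply, Pi.single_eq_of_ne hbi, sub_zero]
  have hzp : ∀ i : Fin n, ¬ Monotone (x + Pi.single i 1) →
      (A.updateCol i (fun a => v a ^ (x i + (i : ℤ) + 1))).det = 0 := by
    intro i hmono
    unfold Monotone at hmono
    push_neg at hmono
    obtain ⟨a, b, hab, hy⟩ := hmono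
    simp only [Pi.add_apply, Pi.single_apply] at hy
    have hai : a = i := by
      by_contra hai
      have h1 : x a ≤ x b := hx hab
      rw [if_neg hai, add_zero] at hy
      split_ifs at hy <;> omega
    subst hai
    have hbi : b ≠ a := by
      rintro rfl
      exact absurd hy (lt_irrefl _)
    rw [if_neg hbi, if_pos rfl, add_zero] at hy
    have haltb : a < b := lt_of_le_of_ne hab (Ne.symm hbi)
    have hxab : x a ≤ x b := hx hab
    have hxb : x b = x a := by omega
    have hval : (a : ℕ) < (b : ℕ) := haltb
    have hj : (a : ℕ) + 1 < n := lt_of_le_of_lt hval b.isLt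
    have hja : (⟨(a : ℕ) + 1, hj⟩ : Fin n) ≠ a := Fin.ne_of_val_ne (by show (a : ℕ) + 1 ≠ (a : ℕ); omega)
    have hxj : x ⟨(a : ℕ) + 1, hj⟩ = x a := by
      have h1 : x a ≤ x ⟨(a : ℕ) + 1, hj⟩ := hx (by rw [Fin.le_def]; exact Nat.le_succ _)
      have h2 : x ⟨(a : ℕ) + 1, hj⟩ ≤ x b := hx (by rw [Fin.le_def]; exact hval)
      omega
    refine Matrix.det_zero_of_column_eq (Ne.symm hja) fun k => ?_
    rw [Matrix.updateCol_self, Matrix.updateCol_ne hja]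
    have hc : ((⟨(a : ℕ) + 1, hj⟩ : Fin n) : ℤ) = (a : ℤ) + 1 := by push_cast; rfl
    have hexp : x ⟨(a : ℕ) + 1, hj⟩ + ((⟨(a : ℕ) + 1, hj⟩ : Fin n) : ℤ)
        = x a + (a : ℤ) + 1 := by rw [hxj, hc]; ring
    rw [show A k ⟨(a : ℕ) + 1, hj⟩
        = v k ^ (x ⟨(a : ℕ) + 1, hj⟩ + ((⟨(a : ℕ) + 1, hj⟩ : Fin n) : ℤ)) from rfl, hexp]
  have hzm : ∀ i : Fin n, ¬ Monotone (x - Pi.single i 1) →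
      (A.updateCol i (fun a => v a ^ (x i + (i : ℤ) - 1))).det = 0 := by
    intro i hmono
    unfold Monotone at hmono
    push_neg at hmono
    obtain ⟨a, b, hab, hy⟩ := hmono
    simp only [Pi.sub_apply, Pi.single_apply] at hy
    have hbi : b = i := by
      by_contra hbi
      have h1 : x a ≤ x b := hx hab
      rw [if_neg hbi, sub_zero] at hy
      split_ifs at hy <;> omega
    subst hbi
    have hai : a ≠ b := by
      rintro rfl
      exact absurd hy (lt_irrefl _)
    rw [if_neg hai, if_pos rfl, sub_zero] at hy
    have haltb : a < b := lt_of_le_of_ne hab hai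
    have hxab : x a ≤ x b := hx hab
    have hxa : x a = x b := by omega
    have hval : (a : ℕ) < (b : ℕ) := haltb
    have hbpos : 0 < (b : ℕ) := by omega
    have hj : (b : ℕ) - 1 < n := by have := b.isLt; omega
    have hjb : (⟨(b : ℕ) - 1, hj⟩ : Fin n) ≠ b := Fin.ne_of_val_ne (by show (b : ℕ) - 1 ≠ (b : ℕ); omega)
    have hxj : x ⟨(b : ℕ) - 1, hj⟩ = x b := by
      have h1 : x a ≤ x ⟨(b : ℕ) - 1, hj⟩ := hx (by rw [Fin.le_def]; exact Nat.le_pred_of_lt hval)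
      have h2 : x ⟨(b : ℕ) - 1, hj⟩ ≤ x b := hx (by rw [Fin.le_def]; exact Nat.sub_le _ _)
      omega
    refine Matrix.det_zero_of_column_eq (Ne.symm hjb) fun k => ?_
    rw [Matrix.updateCol_self, Matrix.updateCol_ne hjb]
    have hc : ((⟨(b : ℕ) - 1, hj⟩ : Fin n) : ℤ) = (b : ℤ) - 1 := by
      show (((b : ℕ) - 1 : ℕ) : ℤ) = (b : ℤ) - 1
      omega
    have hexp : x ⟨(b : ℕ) - 1, hj⟩ + ((⟨(b : ℕ) - 1, hj⟩ : Fin n) : ℤ)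
        = x b + (b : ℤ) - 1 := by rw [hxj, hc]; ring
    rw [show A k ⟨(b : ℕ) - 1, hj⟩
        = v k ^ (x ⟨(b : ℕ) - 1, hj⟩ + ((⟨(b : ℕ) - 1, hj⟩ : Fin n) : ℤ)) from rfl, hexp]
  have hcoladd : ∀ i : Fin n,
      (A.updateCol i (fun a => v a ^ (x i + (i : ℤ) + 1))).det
        + (A.updateCol i (fun a => v a ^ (x i + (i : ℤ) - 1))).det
      = (A.updateCol i (fun a => (v a + (v a)⁻¹) * A a i)).det := by
    intro i
    have hfun : (fun a => (v a + (v a)⁻¹) * A a i)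
        = (fun a => v a ^ (x i + (i : ℤ) + 1)) + (fun a => v a ^ (x i + (i : ℤ) - 1)) := by
      funext a
      show (v a + (v a)⁻¹) * v a ^ (x i + (i : ℤ))
        = v a ^ (x i + (i : ℤ) + 1) + v a ^ (x i + (i : ℤ) - 1)
      rw [zpow_add_one₀ (hvne a), zpow_sub_one₀ (hvne a)]
      ring
    rw [hfun, Matrix.det_updateCol_add]
  calc (∑ i : Fin n,
        ((if Monotone (x + Pi.single i 1) then schurS v (x + Pi.single i 1) / schurS v x else 0) +
          (if Monotone (x - Pi.single i 1) then schurS v (x - Pi.single i 1) / schurS v x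
            else 0)))
      = ∑ i : Fin n, ((A.updateCol i (fun a => v a ^ (x i + (i : ℤ) + 1))).det / A.det
          + (A.updateCol i (fun a => v a ^ (x i + (i : ℤ) - 1))).det / A.det) := by
        refine Finset.sum_congr rfl fun i _ => ?_
        congr 1
        · by_cases h : Monotone (x + Pi.single i 1)
          · rw [if_pos h, hratio, hplus i]
          · rw [if_neg h, hzp i h, zero_div]
        · by_cases h : Monotone (x - Pi.single i 1)
          · rw [if_pos h, hratio, hminus i]
          · rw [if_neg h, hzm i h, zero_div]
    _ = (∑ i : Fin n, ((A.updateCol i (fun a => v a ^ (x i + (i : ℤ) + 1))).det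
          + (A.updateCol i (fun a => v a ^ (x i + (i : ℤ) - 1))).det)) / A.det := by
        rw [Finset.sum_div]
        exact Finset.sum_congr rfl fun i _ => (add_div _ _ _).symm
    _ = ((∑ a, (v a + (v a)⁻¹)) * A.det) / A.det := by
        congr 1
        rw [← sum_det_update A (fun a => v a + (v a)⁻¹)]
        exact Finset.sum_congr rfl fun i _ => hcoladd i
    _ = ∑ i : Fin n, (v i + (v i)⁻¹) := by
        rw [mul_div_assoc, div_self hA, mul_one]
end

section
/- Column-equality identity for the PushASEP transition kernel: let r_t(x,y) = ∏_{k=1}^n v_k^{y_k - x_k} e^{-t(v_k + 1/v_k)} det(F_{ij}(t; x_i+i-1, y_j+j-1))_{i,j=1}^n where F_{ij}(t; a, b) = D_{y_j}^{(1/v_1,...,1/v_j)} J_{x_i}^{(v_1,...,v_i)} ψ_t(a, b). Then for any y ∈ ℤ^n with y_j = y_{j+1} for some 1 ≤ j ≤ n-1, one has v_j^{-1} r_t(x, y + e_j) = v_{j+1}^{-1} r_t(x, y) for all x ∈ ℤ^n and t ≥ 0. -/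
/-- Modified Bessel function of integer order `k ≥ 0` at `2t`. -/
noncomputable def besselI2 (k : ℕ) (t : ℝ) : ℝ :=
  ∑' m : ℕ, t ^ (2 * m + k) / ((m.factorial : ℝ) * ((m + k).factorial : ℝ))

/-- `ψ_t(x,y) = I_{y-x}(2t) - I_{x+y+2}(2t)` (`I_{-k} = I_k`). -/
noncomputable def psi (t : ℝ) (x y : ℤ) : ℝ :=
  besselI2 (y - x).natAbs t - besselI2 (x + y + 2).natAbs t

/-- `(D^{(a)} f)(u) = f u - a * f (u-1)`. -/
noncomputable def Dop (a : ℝ) (f : ℤ → ℝ) : ℤ → ℝ := fun u => f u - a * f (u - 1)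

/-- `(J^{(a)} f)(u) = Σ_{j=u}^∞ a^(u-j) f j`. -/
noncomputable def Jop (a : ℝ) (f : ℤ → ℝ) : ℤ → ℝ := fun u => ∑' m : ℕ, a ^ (-(m : ℤ)) * f (u + m)

/-- Concatenated `D` operators. -/
noncomputable def DIter (l : List ℝ) (f : ℤ → ℝ) : ℤ → ℝ := l.foldr Dop f

/-- Concatenated `J` operators. -/
noncomputable def JIter (l : List ℝ) (f : ℤ → ℝ) : ℤ → ℝ := l.foldr Jop f

/-- The PushASEP-with-a-wall transition kernel
`r_t(x,y) = ∏_k v_k^(y_k - x_k) e^{-t(v_k + 1/v_k)}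
  · det(D_{y_j}^{(1/v_1,...,1/v_j)} J_{x_i}^{(v_1,...,v_i)} ψ_t(x_i + i - 1, y_j + j - 1))`
(0-based indices below; `v k` stands for `v_{k+1}`). -/
noncomputable def rker (n : ℕ) (v : ℕ → ℝ) (t : ℝ) (x y : Fin n → ℤ) : ℝ :=
  (∏ k : Fin n, v k ^ (y k - x k) * Real.exp (-t * (v k + (v k)⁻¹))) *
    Matrix.det (Matrix.of fun i j : Fin n =>
      DIter ((List.range ((j : ℕ) + 1)).map fun k => (v k)⁻¹)
        (fun w => JIter ((List.range ((i : ℕ) + 1)).map v)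
          (fun u => psi t u w) (x i + ((i : ℕ) : ℤ)))
        (y j + ((j : ℕ) : ℤ)))

/-- Two `D` operators commute. -/
lemma Dop_comm (a b : ℝ) (f : ℤ → ℝ) : Dop a (Dop b f) = Dop b (Dop a f) := by
  funext u; simp only [Dop]; ring

/-- `DIter` commutes with a single `Dop`. -/
lemma DIter_Dop (l : List ℝ) (a : ℝ) (f : ℤ → ℝ) :
    DIter l (Dop a f) = Dop a (DIter l f) := by
  induction l with
  | nil => rfl
  | cons b l ih =>
      show Dop b (DIter l (Dop a f)) = Dop a (Dop b (DIter l f))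
      rw [ih, Dop_comm]

/-- Peeling off the last `D` operator. -/
lemma DIter_range_succ (m : ℕ) (g : ℕ → ℝ) (f : ℤ → ℝ) (u : ℤ) :
    DIter ((List.range (m + 1)).map g) f u
      = DIter ((List.range m).map g) f u
        - g m * DIter ((List.range m).map g) f (u - 1) := by
  rw [List.range_succ, List.map_append]
  show ((List.range m).map g ++ [g m]).foldr Dop f u = _
  rw [List.foldr_append]
  show DIter ((List.range m).map g) (Dop (g m) f) u = _
  rw [DIter_Dop]
  rfl

/-- Abstract column-manipulation lemma. -/
lemma det_aux {n : ℕ} (A B : Matrix (Fin n) (Fin n) ℝ) (j j' : Fin n) (hjj : j ≠ j')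
    (a : ℝ) (g : Fin n → ℤ → ℝ) (c : ℤ)
    (hAj : ∀ i, A i j = g i c)
    (hAj' : ∀ i, A i j' = g i (c + 1) - a * g i c)
    (hBj : ∀ i, B i j = g i (c + 1))
    (hBj' : ∀ i, B i j' = g i (c + 1) - a * g i c)
    (hoth : ∀ i jj, jj ≠ j → jj ≠ j' → B i jj = A i jj) :
    B.det = a * A.det := by
  set Q : Matrix (Fin n) (Fin n) ℝ := B.updateCol j (fun k => g k c) with hQ
  have h1 : B.det = a * Q.det := by
    have h := Matrix.det_updateCol_add_smul_self B hjj (-1 : ℝ)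
    have heq : (fun k => B k j + (-1 : ℝ) • B k j') = a • (fun k => g k c) := by
      funext k
      simp only [hBj, hBj', smul_eq_mul, Pi.smul_apply]
      ring
    rw [heq, Matrix.det_updateCol_smul] at h
    rw [← h, hQ]
  set R : Matrix (Fin n) (Fin n) ℝ := Q.updateCol j' (fun k => Q k j' + a • Q k j) with hR
  have h2 : R.det = Q.det := Matrix.det_updateCol_add_smul_self Q hjj.symm a
  have h3 : A.det = R.det := by
    have h4 : A = R.updateCol j' (fun k => R k j' + (-a) • R k j) := by
      ext i jj
      have hRj' : R i j' = g i (c + 1) := by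
        rw [hR, Matrix.updateCol_self, hQ, Matrix.updateCol_ne hjj.symm,
          Matrix.updateCol_self, hBj']
        simp only [smul_eq_mul]
        ring
      have hRj : R i j = g i c := by
        rw [hR, Matrix.updateCol_ne hjj, hQ, Matrix.updateCol_self]
      by_cases hc1 : jj = j'
      · subst hc1
        rw [Matrix.updateCol_self, hRj', hRj, hAj']
        simp only [smul_eq_mul]
        ring
      · rw [Matrix.updateCol_ne hc1]
        by_cases hc2 : jj = j
        · subst hc2
          rw [hRj, hAj]
        · rw [hR, Matrix.updateCol_ne hc1, hQ, Matrix.updateCol_ne hc2,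
            hoth i jj hc2 hc1]
    rw [h4, Matrix.det_updateCol_add_smul_self R hjj.symm (-a)]
  rw [h1, ← h2, ← h3]

/-- Column-equality identity: if `y j = y (j+1)` then
`v_j⁻¹ r_t(x, y + e_j) = v_{j+1}⁻¹ r_t(x, y)`. -/
theorem stmt16 (n : ℕ) (v : ℕ → ℝ) (hv : ∀ k < n, 0 < v k) (t : ℝ) (ht : 0 ≤ t)
    (x y : Fin n → ℤ) (j : Fin n) (hj : (j : ℕ) + 1 < n)
    (hy : y j = y ⟨(j : ℕ) + 1, hj⟩) :
    (v (j : ℕ))⁻¹ * rker n v t x (y + Pi.single j 1) =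
      (v ((j : ℕ) + 1))⁻¹ * rker n v t x y := by
  have hvj : v (j : ℕ) ≠ 0 := ne_of_gt (hv _ (Nat.lt_of_succ_lt hj))
  set y' : Fin n → ℤ := y + Pi.single j 1 with hy'
  simp only [rker]
  set j' : Fin n := ⟨(j : ℕ) + 1, hj⟩ with hj'
  have hjj : j ≠ j' := by
    intro h
    have : (j : ℕ) = (j : ℕ) + 1 := congrArg Fin.val h
    omega
  set F : Fin n → ℤ → ℝ := fun i w =>
    JIter ((List.range ((i : ℕ) + 1)).map v) (fun u => psi t u w) (x i + ((i : ℕ) : ℤ))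
    with hF
  set g : Fin n → ℤ → ℝ := fun i =>
    DIter ((List.range ((j : ℕ) + 1)).map fun k => (v k)⁻¹) (F i) with hg
  set c : ℤ := y j + ((j : ℕ) : ℤ) with hc
  set a : ℝ := (v ((j : ℕ) + 1))⁻¹ with ha
  set A : Matrix (Fin n) (Fin n) ℝ := Matrix.of fun i jj : Fin n =>
      DIter ((List.range ((jj : ℕ) + 1)).map fun k => (v k)⁻¹)
        (fun w => JIter ((List.range ((i : ℕ) + 1)).map v)
          (fun u => psi t u w) (x i + ((i : ℕ) : ℤ)))
        (y jj + ((jj : ℕ) : ℤ)) with hA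
  set B : Matrix (Fin n) (Fin n) ℝ := Matrix.of fun i jj : Fin n =>
      DIter ((List.range ((jj : ℕ) + 1)).map fun k => (v k)⁻¹)
        (fun w => JIter ((List.range ((i : ℕ) + 1)).map v)
          (fun u => psi t u w) (x i + ((i : ℕ) : ℤ)))
        (y' jj + ((jj : ℕ) : ℤ)) with hB
  have hy'j : y' j = y j + 1 := by
    rw [hy']; simp [Pi.single_eq_same]
  have hy'ne : ∀ jj : Fin n, jj ≠ j → y' jj = y jj := by
    intro jj hne
    rw [hy']; simp [Pi.single_eq_of_ne hne]
  have hAj : ∀ i, A i j = g i c := fun i => rfl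
  have hAj' : ∀ i, A i j' = g i (c + 1) - a * g i c := by
    intro i
    rw [hA]
    simp only [Matrix.of_apply]
    have h2 : (((j' : ℕ)) : ℤ) = ((j : ℕ) : ℤ) + 1 := by rw [hj']; push_cast; ring
    rw [show ((j' : ℕ) + 1) = ((j : ℕ) + 1) + 1 from by rw [hj'],
      DIter_range_succ, ← hy, h2]
    rw [show y j + (((j : ℕ) : ℤ) + 1) = c + 1 from by rw [hc]; ring,
      add_sub_cancel_right]
  have hBj : ∀ i, B i j = g i (c + 1) := by
    intro i
    rw [hB]
    simp only [Matrix.of_apply]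
    rw [hy'j, show y j + 1 + ((j : ℕ) : ℤ) = c + 1 from by rw [hc]; ring]
  have hBj' : ∀ i, B i j' = g i (c + 1) - a * g i c := by
    intro i
    rw [hB]
    simp only [Matrix.of_apply]
    have h2 : (((j' : ℕ)) : ℤ) = ((j : ℕ) : ℤ) + 1 := by rw [hj']; push_cast; ring
    rw [hy'ne j' hjj.symm,
      show ((j' : ℕ) + 1) = ((j : ℕ) + 1) + 1 from by rw [hj'],
      DIter_range_succ, ← hy, h2]
    rw [show y j + (((j : ℕ) : ℤ) + 1) = c + 1 from by rw [hc]; ring,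
      add_sub_cancel_right]
  have hoth : ∀ i jj, jj ≠ j → jj ≠ j' → B i jj = A i jj := by
    intro i jj h1 _
    rw [hA, hB]
    simp only [Matrix.of_apply]
    rw [hy'ne jj h1]
  have hdet : B.det = a * A.det := det_aux A B j j' hjj a g c hAj hAj' hBj hBj' hoth
  have hprod :
      (∏ k : Fin n, v k ^ (y' k - x k) * Real.exp (-t * (v k + (v k)⁻¹)))
        = v (j : ℕ) *
          ∏ k : Fin n, v k ^ (y k - x k) * Real.exp (-t * (v k + (v k)⁻¹)) := by
    rw [Finset.prod_eq_mul_prod_sdiff_singleton_of_mem (Finset.mem_univ j)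
      (fun k => v (k : ℕ) ^ (y' k - x k) * Real.exp (-t * (v k + (v k)⁻¹))),
      Finset.prod_eq_mul_prod_sdiff_singleton_of_mem (Finset.mem_univ j)
      (fun k => v (k : ℕ) ^ (y k - x k) * Real.exp (-t * (v k + (v k)⁻¹)))]
    have h1 : v (j : ℕ) ^ (y' j - x j) = v (j : ℕ) * v (j : ℕ) ^ (y j - x j) := by
      rw [hy'j, show y j + 1 - x j = (y j - x j) + 1 from by ring, zpow_add_one₀ hvj]
      ring
    have h2 : ∏ k ∈ Finset.univ \ {j},
          v (k : ℕ) ^ (y' k - x k) * Real.exp (-t * (v k + (v k)⁻¹))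
        = ∏ k ∈ Finset.univ \ {j},
          v (k : ℕ) ^ (y k - x k) * Real.exp (-t * (v k + (v k)⁻¹)) := by
      refine Finset.prod_congr rfl fun k hk => ?_
      have hkj : k ≠ j := by
        simp only [Finset.mem_sdiff, Finset.mem_singleton] at hk
        exact hk.2
      rw [hy'ne k hkj]
    rw [h1, h2]
    ring
  rw [hdet, hprod, ha]
  field_simp
end

section
/- Detailed-balance-type verification for the dynamically reversible array: let S = {(i,j) : i,j ≥ 1, i+j ≤ n+1}, let 𝒳 = {(x_{ij})_{(i,j)∈S} : x_{ij} ∈ ℤ_{≥0}, x_{i+1,j} ≤ x_{ij}, x_{i,j+1} ≤ x_{ij}}, and define π(x) = ∏_{i+j<n+1} (1 - v_i v_{n-j+1})(v_i v_{n-j+1})^{x_{ij} - max(x_{i+1,j}, x_{i,j+1})} · ∏_{i=1}^n (1 - v_i^2) v_i^{2 x_{i,n-i+1}} for 0 < v_1,...,v_n < 1. Then π is a probability mass function on 𝒳: π(x) > 0 for all x ∈ 𝒳 and Σ_{x ∈ 𝒳} π(x) = 1. -/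
/-- The probability mass function of the field of point-to-line last passage times:
for a configuration `x` on the staircase `S = {(i,j) : i,j ≥ 1, i+j ≤ n+1}`
(encoded 0-based: cells `(a,b)` with `a+b+2 ≤ n+1`, extended by `0` off the staircase),
`π(x) = ∏_{i+j<n+1} (1 - v_i v_{n-j+1}) (v_i v_{n-j+1})^(x_{ij} - max(x_{i+1,j}, x_{i,j+1}))
        · ∏_{i=1}^n (1 - v_i²) v_i^(2 x_{i,n-i+1})`. -/
noncomputable def lppPMF (n : ℕ) (v : ℕ → ℝ) (x : ℕ → ℕ → ℕ) : ℝ :=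
  (∏ p ∈ (Finset.range n ×ˢ Finset.range n).filter (fun p => p.1 + p.2 + 2 ≤ n),
      (1 - v p.1 * v (n - 1 - p.2)) *
        (v p.1 * v (n - 1 - p.2)) ^ (x p.1 p.2 - max (x (p.1 + 1) p.2) (x p.1 (p.2 + 1)))) *
    ∏ i ∈ Finset.range n, (1 - v i ^ 2) * v i ^ (2 * x i (n - 1 - i))

/-- The staircase (0-based). -/
def lppT (n : ℕ) : Finset (ℕ × ℕ) :=
  (Finset.range n ×ˢ Finset.range n).filter (fun p => p.1 + p.2 + 1 ≤ n)

lemma mem_lppT {n : ℕ} {a b : ℕ} : (a, b) ∈ lppT n ↔ a + b + 1 ≤ n := by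
  simp only [lppT, Finset.mem_filter, Finset.mem_product, Finset.mem_range]
  omega

/-- Rebuild the last-passage field from its increments. -/
def lppRebuild (n : ℕ) (g : ℕ → ℕ → ℕ) (a b : ℕ) : ℕ :=
  if _h : a + b + 1 ≤ n then
    g a b + max (lppRebuild n g (a + 1) b) (lppRebuild n g a (b + 1))
  else 0
termination_by n - (a + b)
decreasing_by all_goals omega

lemma lppRebuild_on {n : ℕ} (g : ℕ → ℕ → ℕ) {a b : ℕ} (h : a + b + 1 ≤ n) :
    lppRebuild n g a b
      = g a b + max (lppRebuild n g (a + 1) b) (lppRebuild n g a (b + 1)) := by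
  rw [lppRebuild, dif_pos h]

lemma lppRebuild_off {n : ℕ} (g : ℕ → ℕ → ℕ) {a b : ℕ} (h : ¬ a + b + 1 ≤ n) :
    lppRebuild n g a b = 0 := by
  rw [lppRebuild, dif_neg h]

lemma lppD_rebuild {n : ℕ} (g : ℕ → ℕ → ℕ) {a b : ℕ} (h : a + b + 1 ≤ n) :
    lppRebuild n g a b
      - max (lppRebuild n g (a + 1) b) (lppRebuild n g a (b + 1)) = g a b := by
  rw [lppRebuild_on g h, Nat.add_sub_cancel]

lemma lppRebuild_eq (n : ℕ) (h : ℕ → ℕ → ℕ) (x : ℕ → ℕ → ℕ)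
    (hx1 : ∀ i j, i + j + 2 ≤ n → x (i + 1) j ≤ x i j ∧ x i (j + 1) ≤ x i j)
    (hx2 : ∀ i j, ¬ i + j + 2 ≤ n + 1 → x i j = 0)
    (hagree : ∀ a b, a + b + 1 ≤ n →
      h a b = x a b - max (x (a + 1) b) (x a (b + 1))) :
    ∀ a b, lppRebuild n h a b = x a b := by
  suffices key : ∀ k a b, n - (a + b) ≤ k → lppRebuild n h a b = x a b from
    fun a b => key n a b (by omega)
  intro k
  induction k with
  | zero =>
    intro a b hk
    rw [lppRebuild_off h (by omega)]
    exact (hx2 a b (by omega)).symm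
  | succ k ih =>
    intro a b hk
    by_cases hab : a + b + 1 ≤ n
    · rw [lppRebuild_on h hab, ih (a + 1) b (by omega), ih a (b + 1) (by omega),
        hagree a b hab]
      have hm : max (x (a + 1) b) (x a (b + 1)) ≤ x a b := by
        by_cases h2 : a + b + 2 ≤ n
        · exact max_le (hx1 a b h2).1 (hx1 a b h2).2
        · have e1 : x (a + 1) b = 0 := hx2 _ _ (by omega)
          have e2 : x a (b + 1) = 0 := hx2 _ _ (by omega)
          simp [e1, e2]
      omega
    · rw [lppRebuild_off h hab]
      exact (hx2 a b (by omega)).symm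

/-- Extend a function on the staircase by zero. -/
def lppExt (n : ℕ) (g : {p // p ∈ lppT n} → ℕ) : ℕ → ℕ → ℕ := fun a b =>
  if h : (a, b) ∈ lppT n then g ⟨(a, b), h⟩ else 0

lemma lppRebuild_mem (n : ℕ) (g : {p // p ∈ lppT n} → ℕ) :
    (∀ i j, i + j + 2 ≤ n → lppRebuild n (lppExt n g) (i + 1) j ≤ lppRebuild n (lppExt n g) i j ∧
        lppRebuild n (lppExt n g) i (j + 1) ≤ lppRebuild n (lppExt n g) i j) ∧
    (∀ i j, ¬ i + j + 2 ≤ n + 1 → lppRebuild n (lppExt n g) i j = 0) := by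
  constructor
  · intro i j hij
    rw [lppRebuild_on _ (show i + j + 1 ≤ n by omega)]
    constructor
    · exact le_trans (le_max_left _ _) (Nat.le_add_left _ _)
    · exact le_trans (le_max_right _ _) (Nat.le_add_left _ _)
  · intro i j hij
    exact lppRebuild_off _ (by omega)

/-- Bijection between increment arrays and staircase configurations. -/
def lppEquiv (n : ℕ) : ({p // p ∈ lppT n} → ℕ) ≃
    {x : ℕ → ℕ → ℕ //
        (∀ i j, i + j + 2 ≤ n → x (i + 1) j ≤ x i j ∧ x i (j + 1) ≤ x i j) ∧
        (∀ i j, ¬ i + j + 2 ≤ n + 1 → x i j = 0)} where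
  toFun g := ⟨lppRebuild n (lppExt n g), lppRebuild_mem n g⟩
  invFun x p := x.1 p.1.1 p.1.2 - max (x.1 (p.1.1 + 1) p.1.2) (x.1 p.1.1 (p.1.2 + 1))
  left_inv g := by
    funext p
    obtain ⟨⟨a, b⟩, hp⟩ := p
    show lppRebuild n (lppExt n g) a b - _ = _
    rw [lppD_rebuild _ (mem_lppT.mp hp)]
    simp [lppExt, hp]
  right_inv x := by
    apply Subtype.ext
    funext a b
    exact lppRebuild_eq n _ x.1 x.2.1 x.2.2
      (fun a b hab => by
        have hm : (a, b) ∈ lppT n := mem_lppT.mpr hab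
        simp [lppExt, hm]) a b

lemma lpp_single (n : ℕ) (v : ℕ → ℝ) (x : ℕ → ℕ → ℕ)
    (hx2 : ∀ i j, ¬ i + j + 2 ≤ n + 1 → x i j = 0) :
    lppPMF n v x = ∏ p ∈ lppT n,
      (1 - v p.1 * v (n - 1 - p.2)) *
        (v p.1 * v (n - 1 - p.2)) ^ (x p.1 p.2 - max (x (p.1 + 1) p.2) (x p.1 (p.2 + 1))) := by
  classical
  rw [lppPMF,
    ← Finset.prod_filter_mul_prod_filter_not (lppT n) (fun p => p.1 + p.2 + 2 ≤ n)]
  congr 1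
  · apply Finset.prod_congr
    · ext ⟨a, b⟩
      simp only [lppT, Finset.mem_filter, Finset.mem_product, Finset.mem_range]
      omega
    · intros; rfl
  · have himg : (lppT n).filter (fun p => ¬ p.1 + p.2 + 2 ≤ n)
        = (Finset.range n).image (fun i => (i, n - 1 - i)) := by
      ext ⟨a, b⟩
      simp only [lppT, Finset.mem_filter, Finset.mem_product, Finset.mem_range,
        Finset.mem_image, Prod.mk.injEq]
      constructor
      · rintro ⟨⟨⟨ha, hb⟩, h1⟩, h2⟩
        exact ⟨a, ha, rfl, by omega⟩
      · rintro ⟨i, hi, rfl, rfl⟩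
        omega
    rw [himg, Finset.prod_image (by
      intro i _ j _ hij
      simpa using congrArg Prod.fst hij)]
    apply Finset.prod_congr rfl
    intro i hi
    rw [Finset.mem_range] at hi
    have h1 : n - 1 - (n - 1 - i) = i := by omega
    have hz1 : x (i + 1) (n - 1 - i) = 0 := hx2 _ _ (by omega)
    have hz2 : x i (n - 1 - i + 1) = 0 := hx2 _ _ (by omega)
    rw [h1, hz1, hz2]
    simp only [Nat.max_self, Nat.sub_zero]
    rw [show v i * v i = v i ^ 2 by ring, ← pow_mul]

lemma hasSum_pi_fin : ∀ (m : ℕ) (f : Fin m → ℕ → ℝ) (S : Fin m → ℝ),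
    (∀ i k, 0 ≤ f i k) → (∀ i, HasSum (f i) (S i)) →
    HasSum (fun g : Fin m → ℕ => ∏ i, f i (g i)) (∏ i, S i) := by
  intro m
  induction m with
  | zero =>
    intro f S _ _
    simpa using hasSum_fintype (fun g : Fin 0 → ℕ => ∏ i, f i (g i))
  | succ m ih =>
    intro f S hnn h
    have h0 := h 0
    have hIH := ih (fun i => f i.succ) (fun i => S i.succ)
      (fun i k => hnn _ _) (fun i => h i.succ)
    set F : ℕ → ℝ := f 0 with hF
    set G : (Fin m → ℕ) → ℝ := fun y => ∏ i : Fin m, f i.succ (y i) with hG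
    have hs : Summable (fun p : ℕ × (Fin m → ℕ) => F p.1 * G p.2) :=
      Summable.mul_of_nonneg h0.summable hIH.summable (fun k => hnn 0 k)
        (fun g => Finset.prod_nonneg fun i _ => hnn _ _)
    have hmul : HasSum (fun p : ℕ × (Fin m → ℕ) => F p.1 * G p.2)
        (S 0 * ∏ i : Fin m, S i.succ) := (HasSum.mul_eq h0 hIH hs.hasSum) ▸ hs.hasSum
    rw [Fin.prod_univ_succ]
    refine ((Fin.consEquiv (fun _ : Fin (m + 1) => ℕ)).hasSum_iff).mp ?_
    have hfe : ((fun g : Fin (m + 1) → ℕ => ∏ i, f i (g i)) ∘ (Fin.consEquiv (fun _ : Fin (m + 1) => ℕ)))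
        = fun p : ℕ × (Fin m → ℕ) => f 0 p.1 * ∏ i : Fin m, f i.succ (p.2 i) := by
      funext p
      simp [F, G, Fin.prod_univ_succ]
    rw [hfe]
    exact hmul


lemma hasSum_pi_prod {ι : Type*} [Fintype ι] (f : ι → ℕ → ℝ) (S : ι → ℝ)
    (hnn : ∀ i k, 0 ≤ f i k) (h : ∀ i, HasSum (f i) (S i)) :
    HasSum (fun g : ι → ℕ => ∏ i, f i (g i)) (∏ i, S i) := by
  classical
  obtain ⟨m, ⟨e⟩⟩ : ∃ m, Nonempty (ι ≃ Fin m) := ⟨Fintype.card ι, ⟨Fintype.equivFin ι⟩⟩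
  have main := hasSum_pi_fin m (fun j => f (e.symm j)) (fun j => S (e.symm j))
    (fun j k => hnn _ _) (fun j => h _)
  have key : HasSum (fun g : Fin m → ℕ => ∏ i : ι, f i (g (e i))) (∏ i : ι, S i) := by
    have hfun : (fun g : Fin m → ℕ => ∏ i : ι, f i (g (e i)))
        = fun g : Fin m → ℕ => ∏ j, f (e.symm j) (g j) := by
      funext g
      exact Fintype.prod_equiv e (fun i => f i (g (e i))) (fun j => f (e.symm j) (g j))
        (fun i => by simp)
    rw [hfun, show (∏ i : ι, S i) = ∏ j, S (e.symm j) from (Equiv.prod_comp e.symm S).symm]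
    exact main
  refine ((Equiv.arrowCongr e.symm (Equiv.refl ℕ)).hasSum_iff).mp ?_
  have hfe : ((fun h : ι → ℕ => ∏ i, f i (h i)) ∘ (Equiv.arrowCongr e.symm (Equiv.refl ℕ)))
      = fun g : Fin m → ℕ => ∏ i : ι, f i (g (e i)) := by
    funext g
    simp [Equiv.arrowCongr]
  rw [hfe]
  exact key


/-- For `0 < v_1, ..., v_n < 1`, `π` is a probability mass function on the set `𝒳` of
staircase configurations `x` with `x_{i+1,j} ≤ x_{ij}` and `x_{i,j+1} ≤ x_{ij}`:
it is strictly positive on `𝒳` and sums to `1` over `𝒳`. -/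
theorem stmt19 (n : ℕ) (v : ℕ → ℝ) (hv : ∀ i < n, 0 < v i ∧ v i < 1) :
    (∀ x : ℕ → ℕ → ℕ,
        (∀ i j, i + j + 2 ≤ n → x (i + 1) j ≤ x i j ∧ x i (j + 1) ≤ x i j) →
        (∀ i j, ¬ i + j + 2 ≤ n + 1 → x i j = 0) →
        0 < lppPMF n v x) ∧
    (∑' x : {x : ℕ → ℕ → ℕ //
        (∀ i j, i + j + 2 ≤ n → x (i + 1) j ≤ x i j ∧ x i (j + 1) ≤ x i j) ∧
        (∀ i j, ¬ i + j + 2 ≤ n + 1 → x i j = 0)},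
      lppPMF n v x.1) = 1 := by
  classical
  have hqlt : ∀ p ∈ lppT n, 0 < v p.1 * v (n - 1 - p.2) ∧ v p.1 * v (n - 1 - p.2) < 1 := by
    intro p hp
    simp only [lppT, Finset.mem_filter, Finset.mem_product, Finset.mem_range] at hp
    obtain ⟨⟨ha, hb⟩, -⟩ := hp
    have h1 := hv p.1 ha
    have h2 := hv (n - 1 - p.2) (by omega)
    exact ⟨mul_pos h1.1 h2.1, by nlinarith [h1.1, h1.2, h2.1, h2.2]⟩
  constructor
  · intro x hx1 hx2
    rw [lpp_single n v x hx2]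
    apply Finset.prod_pos
    intro p hp
    have h := hqlt p hp
    exact mul_pos (by linarith [h.2]) (pow_pos h.1 _)
  · rw [← Equiv.tsum_eq (lppEquiv n) (fun x => lppPMF n v x.1)]
    have hterm : ∀ g : {p // p ∈ lppT n} → ℕ,
        lppPMF n v ((lppEquiv n) g).1
          = ∏ p : {p // p ∈ lppT n}, (1 - v p.1.1 * v (n - 1 - p.1.2))
              * (v p.1.1 * v (n - 1 - p.1.2)) ^ (g p) := by
      intro g
      rw [lpp_single n v _ ((lppEquiv n g).2.2),
        ← Finset.prod_attach (lppT n) (fun p => (1 - v p.1 * v (n - 1 - p.2))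
          * (v p.1 * v (n - 1 - p.2)) ^ ((lppEquiv n g).1 p.1 p.2
              - max ((lppEquiv n g).1 (p.1 + 1) p.2) ((lppEquiv n g).1 p.1 (p.2 + 1))))]
      rw [show (Finset.univ : Finset {p // p ∈ lppT n}) = (lppT n).attach from
        Finset.univ_eq_attach (lppT n)]
      apply Finset.prod_congr rfl
      rintro ⟨⟨a, b⟩, hp⟩ -
      have hab : a + b + 1 ≤ n := mem_lppT.mp hp
      have hx : (lppEquiv n g).1 = lppRebuild n (lppExt n g) := rfl
      rw [hx, lppD_rebuild _ hab]
      simp [lppExt, hp]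
    rw [tsum_congr hterm]
    have hsum := hasSum_pi_prod
      (fun p : {p // p ∈ lppT n} => fun k => (1 - v p.1.1 * v (n - 1 - p.1.2))
        * (v p.1.1 * v (n - 1 - p.1.2)) ^ k)
      (fun _ => (1 : ℝ))
      (fun p k => by
        have h := hqlt p.1 p.2
        exact mul_nonneg (by linarith [h.2]) (pow_nonneg h.1.le _))
      (fun p => by
        have h := hqlt p.1 p.2
        have hg := (hasSum_geometric_of_lt_one h.1.le h.2).mul_left
          (1 - v p.1.1 * v (n - 1 - p.1.2))
        rwa [mul_inv_cancel₀ (by linarith [h.2])] at hg)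
    rw [hsum.tsum_eq]
    simp
end
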